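/- Let p be a binary path and draw arcs as follows: for each 10-pair eliminated at any stage E^k(p) of the 10-elimination, join the original positions in p of the corresponding 1 and 0 by an arc (1 on the left, 0 on the right). Then the arcs form a non-crossing matching: no two arcs cross, every arc joins a 1 (left endpoint) to a 0 (right endpoint), and the time evolution T_∞(p), obtained by swapping the letters at the two endpoints of every arc, preserves the number of 1s in p. -/

import Mathlib

open List


/-- 10-elimination on a word whose letters carry their original positions in
`p`; also returns the arcs (original position of the 1, original position of
the 0) of the eliminated 10-pairs. -/
def elimIdx : List (ℕ × Bool) → List (ℕ × Bool) × List (ℕ × ℕ)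
  | [] => ([], [])
  | (i, true) :: (j, false) :: rest =>
    ((elimIdx rest).1, (i, j) :: (elimIdx rest).2)
  | x :: rest => (x :: (elimIdx rest).1, (elimIdx rest).2)

/-- All arcs produced during iterated 10-elimination. -/
def allArcs : ℕ → List (ℕ × Bool) → List (ℕ × ℕ)
  | 0, _ => []
  | fuel + 1, w => (elimIdx w).2 ++ allArcs fuel (elimIdx w).1

/-- The arcs of a path: original positions (0-indexed) of the 1 and the 0 of
every 10-pair eliminated at any stage of the iterated 10-elimination. -/
def arcsOf (p : List Bool) : List (ℕ × ℕ) := allArcs p.length ((List.range p.length).zip p)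

theorem aux_zr_map_fst (p : List Bool) : ((List.range p.length).zip p).map Prod.fst = List.range p.length := List.map_fst_zip (by simp)
theorem aux_zr_map_snd (p : List Bool) : ((List.range p.length).zip p).map Prod.snd = p := List.map_snd_zip (by simp)
theorem aux_zr_mem {p : List Bool} {i : ℕ} {b : Bool} : (i, b) ∈ (List.range p.length).zip p ↔ p[i]? = some b := by
  rw [List.mem_iff_getElem, List.getElem?_eq_some_iff]
  constructor
  · rintro ⟨k, hk, he⟩
    simp [List.getElem_zip] at he hk
    obtain ⟨rfl, rfl⟩ := he
    exact ⟨hk, rfl⟩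
  · rintro ⟨hi, rfl⟩
    exact ⟨i, by simp [hi], by simp [List.getElem_zip]⟩
theorem aux_zr_mapIdx {β : Type} (p : List Bool) (f : ℕ → Bool → β) :
    p.mapIdx f = ((List.range p.length).zip p).map (Function.uncurry f) := by
  apply List.ext_getElem <;> simp [List.getElem_zip, Function.uncurry]

def epsOf (arcs : List (ℕ × ℕ)) : List ℕ := arcs.flatMap fun a => [a.1, a.2]

theorem aux_sublist (w : List (ℕ × Bool)) : (elimIdx w).1 <+ w := by
  induction w using elimIdx.induct with
  | case1 => simp [elimIdx]
  | case2 i j rest ih =>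
    simp only [elimIdx]
    exact ih.trans ((List.sublist_cons_self _ _).trans (List.sublist_cons_self _ _))
  | case3 x rest h ih =>
    rw [elimIdx.eq_3 x rest h]
    exact ih.cons₂ x

theorem aux_infix (w : List (ℕ × Bool)) :
    ∀ a ∈ (elimIdx w).2, [(a.1, true), (a.2, false)] <:+: w := by
  induction w using elimIdx.induct with
  | case1 => simp [elimIdx]
  | case2 i j rest ih =>
    simp only [elimIdx]
    intro a ha
    rcases List.mem_cons.mp ha with rfl | ha
    · exact ⟨[], rest, rfl⟩
    · exact (ih a ha).trans ((List.suffix_cons _ _).isInfix.trans (List.suffix_cons _ _).isInfix)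
  | case3 x rest h ih =>
    rw [elimIdx.eq_3 x rest h]
    intro a ha
    exact (ih a ha).trans (List.suffix_cons _ _).isInfix

theorem aux_perm (w : List (ℕ × Bool)) :
    ((elimIdx w).1.map Prod.fst ++ epsOf (elimIdx w).2).Perm (w.map Prod.fst) := by
  induction w using elimIdx.induct with
  | case1 => simp [elimIdx, epsOf]
  | case2 i j rest ih =>
    simp only [elimIdx, epsOf, List.flatMap_cons, List.map_cons]
    simp only [epsOf] at ih
    calc ((elimIdx rest).1.map Prod.fst ++ ([i, j] ++ (elimIdx rest).2.flatMap fun a => [a.1, a.2]))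
        = ((elimIdx rest).1.map Prod.fst ++ [i, j]) ++ (elimIdx rest).2.flatMap fun a => [a.1, a.2] := by
          rw [List.append_assoc]
      _ ~ ([i, j] ++ (elimIdx rest).1.map Prod.fst) ++ (elimIdx rest).2.flatMap fun a => [a.1, a.2] :=
          List.perm_append_comm.append_right _
      _ = [i, j] ++ ((elimIdx rest).1.map Prod.fst ++ (elimIdx rest).2.flatMap fun a => [a.1, a.2]) := by
          rw [List.append_assoc]
      _ ~ [i, j] ++ rest.map Prod.fst := ih.append_left _
      _ = i :: j :: rest.map Prod.fst := rfl
  | case3 x rest h ih =>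
    rw [elimIdx.eq_3 x rest h]
    simpa [epsOf] using ih.cons x.1

theorem aux_pass_pairwise {w : List (ℕ × Bool)} (hw : (w.map Prod.fst).Pairwise (· < ·)) :
    (elimIdx w).2.Pairwise (fun a b => a.2 < b.1) := by
  induction w using elimIdx.induct with
  | case1 => simp [elimIdx]
  | case2 i j rest ih =>
    simp only [List.map_cons, List.pairwise_cons] at hw
    obtain ⟨hi, hj, hrest⟩ := hw
    simp only [elimIdx, List.pairwise_cons]
    refine ⟨fun b hb => ?_, ih hrest⟩
    have : (b.1, true) ∈ rest := ((aux_infix rest b hb).subset) (by simp)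
    exact hj b.1 (List.mem_map.mpr ⟨_, this, rfl⟩)
  | case3 x rest h ih =>
    rw [elimIdx.eq_3 x rest h]
    simp only [List.map_cons, List.pairwise_cons] at hw
    exact ih hw.2

theorem aux_between {l : List ℕ} (hl : l.Pairwise (· < ·)) {x y z : ℕ}
    (h : [x, y] <:+: l) (hz : z ∈ l) : z = x ∨ z = y ∨ z < x ∨ y < z := by
  obtain ⟨s, t, rfl⟩ := h
  rw [List.append_assoc] at hl hz
  rw [List.pairwise_append] at hl
  obtain ⟨hs, hl2, hcross⟩ := hl
  simp only [List.cons_append, List.nil_append, List.pairwise_cons] at hl2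
  rcases List.mem_append.mp hz with hz | hz
  · exact Or.inr (Or.inr (Or.inl (hcross z hz x (by simp))))
  · simp only [List.cons_append, List.nil_append, List.mem_cons] at hz
    rcases hz with rfl | rfl | hz
    · exact Or.inl rfl
    · exact Or.inr (Or.inl rfl)
    · exact Or.inr (Or.inr (Or.inr (hl2.2.1 z hz)))

theorem aux_eps_mem {arcs : List (ℕ × ℕ)} {a : ℕ × ℕ} (ha : a ∈ arcs) :
    a.1 ∈ epsOf arcs ∧ a.2 ∈ epsOf arcs := by
  constructor <;> exact List.mem_flatMap.mpr ⟨a, ha, by simp⟩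

theorem aux_sep {w : List (ℕ × Bool)} (hw : (w.map Prod.fst).Pairwise (· < ·))
    {a : ℕ × ℕ} (ha : a ∈ (elimIdx w).2) {m : ℕ} (hm : m ∈ (elimIdx w).1.map Prod.fst) :
    m ≠ a.1 ∧ m ≠ a.2 ∧ ¬(a.1 < m ∧ m < a.2) := by
  have hnd : (w.map Prod.fst).Nodup := hw.imp Nat.ne_of_lt
  have hnd2 : ((elimIdx w).1.map Prod.fst ++ epsOf (elimIdx w).2).Nodup :=
    ((aux_perm w).nodup_iff).mpr hnd
  have hdisj := (List.nodup_append'.mp hnd2).2.2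
  have h1 : m ≠ a.1 := fun h => hdisj hm (h ▸ (aux_eps_mem ha).1)
  have h2 : m ≠ a.2 := fun h => hdisj hm (h ▸ (aux_eps_mem ha).2)
  refine ⟨h1, h2, fun hbetween => ?_⟩
  have hmw : m ∈ w.map Prod.fst :=
    ((aux_sublist w).map Prod.fst).subset hm
  have hinf : [a.1, a.2] <:+: w.map Prod.fst := by
    have := (aux_infix w a ha).map Prod.fst
    simpa using this
  rcases aux_between hw hinf hmw with rfl | rfl | h | h
  · exact h1 rfl
  · exact h2 rfl
  · omega
  · omega

theorem aux_eps_subperm (fuel : ℕ) (w : List (ℕ × Bool)) :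
    (epsOf (allArcs fuel w)).Subperm (w.map Prod.fst) := by
  induction fuel generalizing w with
  | zero => simp [allArcs, epsOf]
  | succ fuel ih =>
    have h1 : epsOf (allArcs (fuel + 1) w)
        = epsOf (elimIdx w).2 ++ epsOf (allArcs fuel (elimIdx w).1) := by
      simp [allArcs, epsOf]
    rw [h1]
    have h2 := (List.subperm_append_left (epsOf (elimIdx w).2)).mpr (ih (elimIdx w).1)
    refine h2.trans ?_
    exact (List.perm_append_comm.trans (aux_perm w)).subperm

theorem aux_main (fuel : ℕ) (w : List (ℕ × Bool)) (hw : (w.map Prod.fst).Pairwise (· < ·)) :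
    (∀ a ∈ allArcs fuel w, a.1 < a.2 ∧ (a.1, true) ∈ w ∧ (a.2, false) ∈ w)
    ∧ (allArcs fuel w).Pairwise (fun a b =>
        a.1 ≠ b.1 ∧ a.1 ≠ b.2 ∧ a.2 ≠ b.1 ∧ a.2 ≠ b.2
        ∧ ¬(a.1 < b.1 ∧ b.1 < a.2 ∧ a.2 < b.2)
        ∧ ¬(b.1 < a.1 ∧ a.1 < b.2 ∧ b.2 < a.2)) := by
  induction fuel generalizing w with
  | zero => simp [allArcs]
  | succ fuel ih =>
    have hw1 : ((elimIdx w).1.map Prod.fst).Pairwise (· < ·) :=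
      hw.sublist ((aux_sublist w).map Prod.fst)
    obtain ⟨ih1, ih2⟩ := ih (elimIdx w).1 hw1
    simp only [allArcs]
    have horder : ∀ a ∈ (elimIdx w).2, a.1 < a.2 ∧ (a.1, true) ∈ w ∧ (a.2, false) ∈ w := by
      intro a ha
      have hinf := aux_infix w a ha
      have hmem1 : (a.1, true) ∈ w := hinf.subset (by simp)
      have hmem2 : (a.2, false) ∈ w := hinf.subset (by simp)
      have hinf2 : [a.1, a.2] <:+: w.map Prod.fst := by
        have := hinf.map Prod.fst; simpa using this
      obtain ⟨s, t, heq⟩ := hinf2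
      rw [← heq, List.append_assoc, List.pairwise_append] at hw
      have := hw.2.1
      simp only [List.cons_append, List.nil_append, List.pairwise_cons] at this
      exact ⟨this.1 a.2 (by simp), hmem1, hmem2⟩
    constructor
    · intro a ha
      rcases List.mem_append.mp ha with ha | ha
      · exact horder a ha
      · obtain ⟨h1, h2, h3⟩ := ih1 a ha
        exact ⟨h1, (aux_sublist w).subset h2, (aux_sublist w).subset h3⟩
    · rw [List.pairwise_append]
      refine ⟨?_, ?_, ?_⟩
      · -- within one pass
        have hp := aux_pass_pairwise hw
        refine hp.imp_of_mem ?_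
        intro a b ha hb hab
        have h1 := (horder a ha).1
        have h2 := (horder b hb).1
        omega
      · exact ih2
      · -- across passes
        intro a ha b hb
        have ha1 := (horder a ha).1
        obtain ⟨hb1, hbmem1, hbmem2⟩ := ih1 b hb
        have hm1 : b.1 ∈ (elimIdx w).1.map Prod.fst := List.mem_map.mpr ⟨_, hbmem1, rfl⟩
        have hm2 : b.2 ∈ (elimIdx w).1.map Prod.fst := List.mem_map.mpr ⟨_, hbmem2, rfl⟩
        obtain ⟨s1, s2, s3⟩ := aux_sep hw ha hm1
        obtain ⟨t1, t2, t3⟩ := aux_sep hw ha hm2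
        refine ⟨fun h => s1 h.symm, fun h => t1 h.symm, fun h => s2 h.symm, fun h => t2 h.symm, ?_, ?_⟩ <;> omega


/-- The time evolution `T_∞`: swap the letters at the two endpoints of every
arc. -/
def flipArcs (p : List Bool) (arcs : List (ℕ × ℕ)) : List Bool :=
  p.mapIdx (fun i a => if arcs.any (fun e => e.1 == i || e.2 == i) then !a else a)

theorem aux_countF (arcs : List (ℕ × ℕ)) :
    (arcs.flatMap fun a => [(a.1, true), (a.2, false)]).countP (fun x => x.2)
      = arcs.length
    ∧ (arcs.flatMap fun a => [(a.1, true), (a.2, false)]).countP (fun x => !x.2)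
      = arcs.length := by
  induction arcs with
  | nil => simp
  | cons a arcs ih => simp [List.countP_cons, ih.1, ih.2]

theorem aux_count_flip (p : List Bool) (arcs : List (ℕ × ℕ))
    (hnd : (epsOf arcs).Nodup)
    (harc : ∀ a ∈ arcs, p[a.1]? = some true ∧ p[a.2]? = some false) :
    (flipArcs p arcs).count true = p.count true := by
  classical
  set P : ℕ → Bool := fun i => arcs.any (fun e => e.1 == i || e.2 == i) with hP
  set P' : ℕ × Bool → Bool := fun x => P x.1 with hP'
  set F : List (ℕ × Bool) := arcs.flatMap fun a => [(a.1, true), (a.2, false)] with hF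
  -- the filtered enum is a permutation of F
  have hFnodup : F.Nodup := by
    have : F.map Prod.fst = epsOf arcs := by
      simp [hF, epsOf, List.map_flatMap]
    exact List.Nodup.of_map Prod.fst (this ▸ hnd)
  have henumnd : ((List.range p.length).zip p).Nodup := List.Nodup.of_map Prod.fst (by
    rw [aux_zr_map_fst]; exact List.nodup_range (n := p.length))
  have hPiff : ∀ i : ℕ, P i = true ↔ ∃ e ∈ arcs, e.1 = i ∨ e.2 = i := by
    intro i; simp [hP, List.any_eq_true]
  have hFmem : ∀ x : ℕ × Bool, x ∈ F ↔ ∃ e ∈ arcs, x = (e.1, true) ∨ x = (e.2, false) := by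
    intro x; simp [hF, List.mem_flatMap]
  have hperm : (((List.range p.length).zip p).filter P').Perm F := by
    refine List.Subperm.antisymm ?_ ?_
    · refine List.subperm_of_subset (henumnd.filter P') ?_
      intro x hx
      obtain ⟨hxe, hxP⟩ := List.mem_filter.mp hx
      obtain ⟨i, b⟩ := x
      have hget : p[i]? = some b := aux_zr_mem.mp hxe
      obtain ⟨e, he, hei⟩ := (hPiff i).mp hxP
      rcases hei with rfl | rfl
      · have hb : b = true := by
          have := (harc e he).1; rw [hget] at this; exact Option.some_inj.mp this
        exact (hFmem _).mpr ⟨e, he, Or.inl (by rw [hb])⟩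
      · have hb : b = false := by
          have := (harc e he).2; rw [hget] at this; exact Option.some_inj.mp this
        exact (hFmem _).mpr ⟨e, he, Or.inr (by rw [hb])⟩
    · refine List.subperm_of_subset hFnodup ?_
      intro x hx
      obtain ⟨e, he, hxe⟩ := (hFmem x).mp hx
      rcases hxe with rfl | rfl
      · refine List.mem_filter.mpr ⟨aux_zr_mem.mpr (harc e he).1, ?_⟩
        simp only [hP', hP]
        exact (hPiff e.1).mpr ⟨e, he, Or.inl rfl⟩
      · refine List.mem_filter.mpr ⟨aux_zr_mem.mpr (harc e he).2, ?_⟩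
        simp only [hP', hP]
        exact (hPiff e.2).mpr ⟨e, he, Or.inr rfl⟩
  -- counts over enum
  have hsplit : ∀ q : ℕ × Bool → Bool,
      ((List.range p.length).zip p).countP q = (((List.range p.length).zip p).filter P').countP q + (((List.range p.length).zip p).filter (fun x => !P' x)).countP q := by
    intro q
    conv_lhs => rw [← (List.filter_append_perm P' ((List.range p.length).zip p)).countP_eq q]
    rw [List.countP_append]
  have hflip : (flipArcs p arcs).count true
      = ((List.range p.length).zip p).countP (fun x => (if P x.1 then !x.2 else x.2) == true) := by
    rw [flipArcs, aux_zr_mapIdx, List.count, List.countP_map]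
    rfl
  have horig : p.count true = ((List.range p.length).zip p).countP (fun x => x.2) := by
    conv_lhs => rw [← aux_zr_map_snd p]
    rw [List.count, List.countP_map]
    refine List.countP_congr fun x _ => ?_
    simp [Function.comp]
  rw [hflip, horig, hsplit, hsplit]
  have e1 : (((List.range p.length).zip p).filter P').countP (fun x => (if P x.1 then !x.2 else x.2) == true)
      = (((List.range p.length).zip p).filter P').countP (fun x => !x.2) := by
    refine List.countP_congr fun x hx => ?_
    have := (List.mem_filter.mp hx).2
    simp only [hP'] at this
    simp [this]
  have e2 : (((List.range p.length).zip p).filter (fun x => !P' x)).countP (fun x => (if P x.1 then !x.2 else x.2) == true)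
      = (((List.range p.length).zip p).filter (fun x => !P' x)).countP (fun x => x.2) := by
    refine List.countP_congr fun x hx => ?_
    have := (List.mem_filter.mp hx).2
    simp only [hP', Bool.not_eq_true'] at this
    simp [this]
  rw [e1, e2, hperm.countP_eq, hperm.countP_eq, (aux_countF arcs).1, (aux_countF arcs).2]

/-- The arcs form a non-crossing matching: every arc joins a 1 (left endpoint)
to a 0 (right endpoint), the arcs are pairwise disjoint and non-crossing, and
the time evolution `T_∞` obtained by swapping along all arcs preserves the
number of 1s. -/
theorem stmt19 (p : List Bool) :
    (∀ a ∈ arcsOf p, a.1 < a.2 ∧ p[a.1]? = some true ∧ p[a.2]? = some false)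
    ∧ (arcsOf p).Pairwise (fun a b =>
        a.1 ≠ b.1 ∧ a.1 ≠ b.2 ∧ a.2 ≠ b.1 ∧ a.2 ≠ b.2
        ∧ ¬(a.1 < b.1 ∧ b.1 < a.2 ∧ a.2 < b.2)
        ∧ ¬(b.1 < a.1 ∧ a.1 < b.2 ∧ b.2 < a.2))
    ∧ (flipArcs p (arcsOf p)).count true = p.count true := by
  simp only [arcsOf]
  have hw : (((List.range p.length).zip p).map Prod.fst).Pairwise (· < ·) := by
    rw [aux_zr_map_fst]; exact List.pairwise_lt_range (n := _)
  obtain ⟨h1, h2⟩ := aux_main p.length ((List.range p.length).zip p) hw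
  have h1' : ∀ a ∈ allArcs p.length ((List.range p.length).zip p),
      a.1 < a.2 ∧ p[a.1]? = some true ∧ p[a.2]? = some false := by
    intro a ha
    obtain ⟨hlt, hm1, hm2⟩ := h1 a ha
    exact ⟨hlt, aux_zr_mem.mp hm1, aux_zr_mem.mp hm2⟩
  refine ⟨h1', h2, ?_⟩
  refine aux_count_flip p _ ?_ (fun a ha => (h1' a ha).2)
  have hsp := aux_eps_subperm p.length ((List.range p.length).zip p)
  rw [aux_zr_map_fst] at hsp
  obtain ⟨l, hperm, hsub⟩ := hsp
  exact hperm.nodup_iff.mp (hsub.nodup (List.nodup_range (n := _)))
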